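/- Fix a point m ∈ ℝ⁵ with coordinates (x¹,x²,z,p₁,p₂), the contact covector θ_m = dz − p₁dx¹ − p₂dx², and the 2-covector Ω₅ = dx¹∧dp₁ + dx²∧dp₂ (equal to dθ at m). Let Ψ = A dp₁∧dp₂ + B dp₁∧dx² + C dx¹∧dp₂ + E₁ dp₁∧dx¹ + E₂ dp₂∧dx² + F dx¹∧dx² be a 2-covector at m. Then Ψ ∧ Ω₅ lies in the ideal generated by θ_m (i.e. Ψ ∧ Ω₅ = θ_m ∧ γ for some 3-covector γ) if and only if E₁ + E₂ = 0. -/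

import Mathlib

/-!
Covectors at a point of `ℝ⁵` with coordinates `(x¹,x²,z,p₁,p₂)`
(indexed `0,1,2,3,4`): `dl 0 = dx¹`, `dl 1 = dx²`, `dl 2 = dz`, `dl 3 = dp₁`,
`dl 4 = dp₂`.  `wedgeF` is the wedge product of alternating forms.
-/

noncomputable section

abbrev V5 : Type := Fin 5 → ℝ

/-- The wedge product of real-valued alternating forms. -/
noncomputable def wedgeF {M : Type} [AddCommGroup M] [Module ℝ M] {a b : ℕ}
    (f : M [⋀^Fin a]→ₗ[ℝ] ℝ) (g : M [⋀^Fin b]→ₗ[ℝ] ℝ) :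
    M [⋀^Fin (a + b)]→ₗ[ℝ] ℝ :=
  ((TensorProduct.lid ℝ ℝ).toLinearMap.compAlternatingMap
    (f.domCoprod g)).domDomCongr finSumFinEquiv

/-- The coordinate covectors (as alternating 1-forms). -/
noncomputable def dl {n : ℕ} (i : Fin n) : (Fin n → ℝ) [⋀^Fin 1]→ₗ[ℝ] ℝ :=
  AlternatingMap.ofSubsingleton ℝ (Fin n → ℝ) ℝ 0 (LinearMap.proj i)

/-- The contact covector `θ = dz − p₁dx¹ − p₂dx²` at a point with coordinate
values `p₁, p₂`. -/
noncomputable def θc (p1 p2 : ℝ) : V5 [⋀^Fin 1]→ₗ[ℝ] ℝ :=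
  dl 2 - p1 • dl 0 - p2 • dl 1

/-- `Ω₅ = dx¹∧dp₁ + dx²∧dp₂` (the value of `dθ`). -/
noncomputable def Ω5 : V5 [⋀^Fin 2]→ₗ[ℝ] ℝ :=
  wedgeF (dl 0) (dl 3) + wedgeF (dl 1) (dl 4)

/-- `Ψ = A dp₁∧dp₂ + B dp₁∧dx² + C dx¹∧dp₂ + E₁ dp₁∧dx¹ + E₂ dp₂∧dx² + F dx¹∧dx²`. -/
noncomputable def Ψc (A B C E1 E2 F : ℝ) : V5 [⋀^Fin 2]→ₗ[ℝ] ℝ :=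
  A • wedgeF (dl 3) (dl 4) + B • wedgeF (dl 3) (dl 1) +
  C • wedgeF (dl 0) (dl 4) + E1 • wedgeF (dl 3) (dl 0) +
  E2 • wedgeF (dl 4) (dl 1) + F • wedgeF (dl 0) (dl 1)

/- ### Auxiliary machinery -/

lemma wedgeF_eval {M : Type} [AddCommGroup M] [Module ℝ M] {a b : ℕ}
    (f : M [⋀^Fin a]→ₗ[ℝ] ℝ) (g : M [⋀^Fin b]→ₗ[ℝ] ℝ) (v : Fin (a+b) → M) :
    ((a.factorial * b.factorial : ℕ) : ℝ) * wedgeF f g v =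
    ∑ τ : Equiv.Perm (Fin (a+b)), ((Equiv.Perm.sign τ : ℤ) : ℝ) *
      (f (fun i => v (τ (Fin.castAdd b i))) * g (fun j => v (τ (Fin.natAdd a j)))) := by
  have h := MultilinearMap.domCoprod_alternization_eq f g
  have h2 := congrArg (fun F => F (fun i => v (finSumFinEquiv i))) h
  simp only [MultilinearMap.alternatization_apply, Fintype.card_fin,
    AlternatingMap.smul_apply, MultilinearMap.domDomCongr_apply,
    MultilinearMap.domCoprod_apply] at h2
  have lidsm : ∀ (s : ℤˣ) (x y : ℝ), (TensorProduct.lid ℝ ℝ).toLinearMap (s • (x ⊗ₜ[ℝ] y))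
      = ((s : ℤ) : ℝ) * (x * y) := by
    intro s x y
    have hz : (TensorProduct.lid ℝ ℝ).toLinearMap (s • (x ⊗ₜ[ℝ] y)) =
        (s : ℤ) • (TensorProduct.lid ℝ ℝ).toLinearMap (x ⊗ₜ[ℝ] y) := by
      rw [Units.smul_def]; exact map_zsmul _ _ _
    rw [hz]
    simp [TensorProduct.lid_tmul, smul_eq_mul]
  have key : ((a.factorial * b.factorial : ℕ) : ℝ) * wedgeF f g v =
      (TensorProduct.lid ℝ ℝ).toLinearMap
        ((a.factorial * b.factorial : ℕ) • (f.domCoprod g) (fun i => v (finSumFinEquiv i))) := by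
    rw [map_nsmul]
    simp only [wedgeF, AlternatingMap.domDomCongr_apply, LinearMap.compAlternatingMap_apply,
      nsmul_eq_mul]
    congr 1
  rw [key, ← h2, map_sum]
  refine Fintype.sum_equiv (finSumFinEquiv.permCongr) _ _ fun σ => ?_
  rw [lidsm]
  have h1 : (fun i => v ((finSumFinEquiv.permCongr σ) (Fin.castAdd b i))) =
      fun i => v (finSumFinEquiv (σ (Sum.inl i))) := by
    funext i; simp [Equiv.permCongr_apply]
  have hg : (fun j => v ((finSumFinEquiv.permCongr σ) (Fin.natAdd a j))) =
      fun j => v (finSumFinEquiv (σ (Sum.inr j))) := by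
    funext j; simp [Equiv.permCongr_apply]
  rw [Equiv.Perm.sign_permCongr, h1, hg]
  simp

lemma sum_perm_succ {n : ℕ} (F : Equiv.Perm (Fin (n+1)) → ℝ) :
    ∑ σ, F σ = ∑ p : Fin (n+1), ∑ σ : Equiv.Perm (Fin n),
      F (Equiv.Perm.decomposeFin.symm (p, σ)) := by
  rw [Fintype.sum_equiv Equiv.Perm.decomposeFin F
    (fun x => F (Equiv.Perm.decomposeFin.symm x)) (fun σ => by simp),
    Fintype.sum_prod_type]

lemma sum_perm_one (F : Equiv.Perm (Fin 1) → ℝ) : ∑ σ, F σ = F 1 :=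
  Fintype.sum_subsingleton _ 1

lemma sum_perm_zero (F : Equiv.Perm (Fin 0) → ℝ) : ∑ σ, F σ = F 1 :=
  Fintype.sum_subsingleton _ 1

set_option maxHeartbeats 1000000 in
lemma sum_perm4_eq (G : Fin 4 → Fin 4 → Fin 4 → Fin 4 → ℝ) :
    ∑ τ : Equiv.Perm (Fin 4), ((Equiv.Perm.sign τ : ℤ) : ℝ) * G (τ 0) (τ 1) (τ 2) (τ 3) =
    G 0 1 2 3 - G 0 1 3 2 - G 0 2 1 3 + G 0 2 3 1 + G 0 3 1 2 - G 0 3 2 1 - G 1 0 2 3 + G 1 0 3 2 + G 1 2 0 3 - G 1 2 3 0 - G 1 3 0 2 + G 1 3 2 0 + G 2 0 1 3 - G 2 0 3 1 - G 2 1 0 3 + G 2 1 3 0 + G 2 3 0 1 - G 2 3 1 0 - G 3 0 1 2 + G 3 0 2 1 + G 3 1 0 2 - G 3 1 2 0 - G 3 2 0 1 + G 3 2 1 0 := by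
  rw [sum_perm_succ]
  simp only [sum_perm_succ, sum_perm_one, sum_perm_zero, Fin.sum_univ_succ, Fin.sum_univ_zero,
    add_zero]
  simp only [show (1:Fin 4) = Fin.succ (0 : Fin 3) from rfl,
    show (2:Fin 4) = Fin.succ (1 : Fin 3) from rfl,
    show (3:Fin 4) = Fin.succ (2 : Fin 3) from rfl,
    show (1:Fin 3) = Fin.succ (0 : Fin 2) from rfl,
    show (2:Fin 3) = Fin.succ (1 : Fin 2) from rfl,
    show (1:Fin 2) = Fin.succ (0 : Fin 1) from rfl,
    Equiv.Perm.decomposeFin_symm_apply_zero, Equiv.Perm.decomposeFin_symm_apply_succ,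
    Equiv.Perm.decomposeFin.symm_sign, Equiv.Perm.one_apply, Equiv.swap_apply_def]
  simp (config := { decide := true }) only [
    show (Fin.succ (0 : Fin 3)) = 1 from rfl,
    show (Fin.succ (1 : Fin 3)) = 2 from rfl,
    show (Fin.succ (2 : Fin 3)) = 3 from rfl,
    show (Fin.succ (0 : Fin 2)) = 1 from rfl,
    show (Fin.succ (1 : Fin 2)) = 2 from rfl,
    show (Fin.succ (0 : Fin 1)) = 1 from rfl,
    if_true, if_false, Units.val_one, Units.val_neg, Int.cast_one, Int.cast_neg,
    Equiv.Perm.sign_one, mul_one, neg_mul, one_mul, neg_neg]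
  ring

lemma sum_perm2_eq (G : Fin 2 → Fin 2 → ℝ) :
    ∑ τ : Equiv.Perm (Fin 2), ((Equiv.Perm.sign τ : ℤ) : ℝ) * G (τ 0) (τ 1) =
    G 0 1 - G 1 0 := by
  rw [sum_perm_succ]
  simp only [sum_perm_succ, sum_perm_one, sum_perm_zero, Fin.sum_univ_succ, Fin.sum_univ_zero,
    add_zero]
  simp only [show (1:Fin 2) = Fin.succ (0 : Fin 1) from rfl,
    Equiv.Perm.decomposeFin_symm_apply_zero, Equiv.Perm.decomposeFin_symm_apply_succ,
    Equiv.Perm.decomposeFin.symm_sign, Equiv.Perm.one_apply, Equiv.swap_apply_def]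
  simp (config := { decide := true }) only [
    show (Fin.succ (0 : Fin 1)) = 1 from rfl,
    if_true, if_false, Units.val_one, Units.val_neg, Int.cast_one, Int.cast_neg,
    Equiv.Perm.sign_one, mul_one, neg_mul, one_mul, neg_neg]
  ring

lemma wedge22_eval (f g : V5 [⋀^Fin 2]→ₗ[ℝ] ℝ) (v : Fin 4 → V5) :
    (4:ℝ) * wedgeF f g v =
    ∑ τ : Equiv.Perm (Fin 4), ((Equiv.Perm.sign τ : ℤ) : ℝ) *
      (f ![v (τ 0), v (τ 1)] * g ![v (τ 2), v (τ 3)]) := by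
  have h := wedgeF_eval f g v
  norm_num at h
  rw [h]
  refine Finset.sum_congr rfl fun τ _ => ?_
  congr 1
  congr 1
  · congr 1
    funext i
    fin_cases i <;> rfl
  · congr 1
    funext j
    fin_cases j <;> rfl

lemma wedge13_eval (f : V5 [⋀^Fin 1]→ₗ[ℝ] ℝ) (g : V5 [⋀^Fin 3]→ₗ[ℝ] ℝ) (v : Fin 4 → V5) :
    (6:ℝ) * wedgeF f g v =
    ∑ τ : Equiv.Perm (Fin 4), ((Equiv.Perm.sign τ : ℤ) : ℝ) *
      (f ![v (τ 0)] * g ![v (τ 1), v (τ 2), v (τ 3)]) := by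
  have h := wedgeF_eval f g v
  norm_num [Nat.factorial] at h
  rw [h]
  refine Finset.sum_congr rfl fun τ _ => ?_
  congr 1
  congr 1
  · congr 1
    funext i
    fin_cases i <;> rfl
  · congr 1
    funext j
    fin_cases j <;> rfl

lemma dl_apply {n : ℕ} (i : Fin n) (u : Fin 1 → (Fin n → ℝ)) : dl i u = u 0 i := rfl

lemma w11 {n : ℕ} (i j : Fin n) (u : Fin 2 → (Fin n → ℝ)) :
    wedgeF (dl i) (dl j) u = u 0 i * u 1 j - u 1 i * u 0 j := by
  have h := wedgeF_eval (dl i) (dl j) u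
  norm_num at h
  have h2 := sum_perm2_eq (fun a b => u a i * u b j)
  have : (∑ τ : Equiv.Perm (Fin (1+1)), ((Equiv.Perm.sign τ : ℤ) : ℝ) *
      (((dl i) fun k => u (τ (Fin.castAdd 1 k))) * (dl j) fun k => u (τ k.succ))) =
      ∑ τ : Equiv.Perm (Fin 2), ((Equiv.Perm.sign τ : ℤ) : ℝ) * (u (τ 0) i * u (τ 1) j) := by
    refine Finset.sum_congr rfl fun τ _ => ?_
    rw [dl_apply, dl_apply]
    rfl
  rw [this, h2] at h
  linarith

lemma θc_apply (p1 p2 : ℝ) (u : Fin 1 → V5) :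
    θc p1 p2 u = u 0 2 - p1 * u 0 0 - p2 * u 0 1 := by
  simp [θc, dl_apply, AlternatingMap.sub_apply, AlternatingMap.smul_apply, smul_eq_mul]

lemma Ω5_apply (u : Fin 2 → V5) :
    Ω5 u = (u 0 0 * u 1 3 - u 1 0 * u 0 3) + (u 0 1 * u 1 4 - u 1 1 * u 0 4) := by
  simp [Ω5, w11, AlternatingMap.add_apply]

lemma Ψc_apply (A B C E1 E2 F : ℝ) (u : Fin 2 → V5) :
    Ψc A B C E1 E2 F u =
      A * (u 0 3 * u 1 4 - u 1 3 * u 0 4) + B * (u 0 3 * u 1 1 - u 1 3 * u 0 1) +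
      C * (u 0 0 * u 1 4 - u 1 0 * u 0 4) + E1 * (u 0 3 * u 1 0 - u 1 3 * u 0 0) +
      E2 * (u 0 4 * u 1 1 - u 1 4 * u 0 1) + F * (u 0 0 * u 1 1 - u 1 0 * u 0 1) := by
  simp [Ψc, w11, AlternatingMap.add_apply, AlternatingMap.smul_apply, smul_eq_mul]

/- ### The main theorem -/

/-- the 4-covector `Ψ ∧ Ω₅` lies in the ideal generated by `θ`
(i.e. `Ψ ∧ Ω₅ = θ ∧ γ` for some 3-covector `γ`) iff `E₁ + E₂ = 0`. -/
theorem stmt_16 (p1 p2 A B C E1 E2 F : ℝ) :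
    (∃ γ : V5 [⋀^Fin 3]→ₗ[ℝ] ℝ,
      (wedgeF (Ψc A B C E1 E2 F) Ω5 : V5 [⋀^Fin 4]→ₗ[ℝ] ℝ) =
      (wedgeF (θc p1 p2) γ : V5 [⋀^Fin 4]→ₗ[ℝ] ℝ)) ↔
    E1 + E2 = 0 := by
  constructor
  · rintro ⟨γ, hγ⟩
    set v : Fin 4 → V5 :=
      ![![0,0,0,1,0], ![1,0,p1,0,0], ![0,1,p2,0,0], ![0,0,0,0,1]] with hv
    have hz : ∀ k : Fin 4, v k 2 - p1 * v k 0 - p2 * v k 1 = 0 := by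
      intro k
      fin_cases k <;> norm_num [hv, Matrix.cons_val_two, Matrix.tail_cons, Matrix.head_cons]
    have h2 : (6:ℝ) * wedgeF (θc p1 p2) γ v = 0 := by
      rw [wedge13_eval]
      refine Finset.sum_eq_zero fun τ _ => ?_
      rw [θc_apply]
      simp only [Matrix.cons_val_zero]
      rw [hz (τ 0)]
      ring
    have h1 := wedge22_eval (Ψc A B C E1 E2 F) Ω5 v
    have h24 := sum_perm4_eq
      (fun a b c d => Ψc A B C E1 E2 F ![v a, v b] * Ω5 ![v c, v d])
    rw [h24] at h1
    simp only [Ψc_apply, Ω5_apply, Matrix.cons_val_zero, Matrix.cons_val_one,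
      Matrix.head_cons, Matrix.cons_val_two, Matrix.tail_cons, Matrix.cons_val_three,
      Matrix.cons_val_four, hv] at h1
    norm_num at h1
    have hval := congrArg (fun G => G v) hγ
    rw [hval] at h1
    linarith
  · intro hE
    have hE2 : E2 = -E1 := by linarith
    subst hE2
    refine ⟨0, ?_⟩
    ext v
    have h2 : (6:ℝ) * wedgeF (θc p1 p2) (0 : V5 [⋀^Fin 3]→ₗ[ℝ] ℝ) v = 0 := by
      rw [wedge13_eval]
      refine Finset.sum_eq_zero fun τ _ => ?_
      simp
    have h1 := wedge22_eval (Ψc A B C E1 (-E1) F) Ω5 v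
    have h24 := sum_perm4_eq
      (fun a b c d => Ψc A B C E1 (-E1) F ![v a, v b] * Ω5 ![v c, v d])
    rw [h24] at h1
    simp only [Ψc_apply, Ω5_apply, Matrix.cons_val_zero, Matrix.cons_val_one,
      Matrix.head_cons] at h1
    have hL : (4:ℝ) * wedgeF (Ψc A B C E1 (-E1) F) Ω5 v = 0 := by
      rw [h1]; ring
    have : wedgeF (Ψc A B C E1 (-E1) F) Ω5 v = 0 := by linarith
    rw [this]
    linarith
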